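/- Let G be a group and let 𝒜 = {a_1, …, a_K} be a finite nonempty subset of G. Then the neutral element of G is represented by some full-image word over 𝒜 if and only if the subsemigroup ⟨𝒜⟩ generated by 𝒜 is a group. -/

import Mathlib

/-- A word (nonempty list) `l` over the alphabet `𝒜` is *full-image* if every element
of `𝒜` occurs in `l`.  It represents the product of its letters. -/
def IsFullImageWord {G : Type*} [Group G] (𝒜 : Finset G) (l : List G) : Prop :=
  l ≠ [] ∧ (∀ x ∈ l, x ∈ 𝒜) ∧ (∀ a ∈ 𝒜, a ∈ l)

/-- A subsemigroup `S` of a group is a group if it contains the neutral element and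
is closed under inverses. -/
def Subsemigroup.IsSubgroup {G : Type*} [Group G] (S : Subsemigroup G) : Prop :=
  (1 : G) ∈ S ∧ ∀ x ∈ S, x⁻¹ ∈ S

lemma mem_semigroup_closure_iff {G : Type*} [Group G] (𝒜 : Finset G) (x : G) :
    x ∈ Subsemigroup.closure (𝒜 : Set G) ↔
      ∃ l : List G, l ≠ [] ∧ (∀ y ∈ l, y ∈ 𝒜) ∧ l.prod = x := by
  constructor
  · intro hx
    induction hx using Subsemigroup.closure_induction with
    | mem a ha => exact ⟨[a], by simp, by simpa using ha, by simp⟩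
    | mul a b _ _ iha ihb =>
      obtain ⟨l1, h1, h1m, h1p⟩ := iha
      obtain ⟨l2, h2, h2m, h2p⟩ := ihb
      exact ⟨l1 ++ l2, by simp [h1], by
        intro y hy; rcases List.mem_append.1 hy with h | h
        · exact h1m y h
        · exact h2m y h, by simp [h1p, h2p]⟩
  · rintro ⟨l, hne, hmem, rfl⟩
    induction l with
    | nil => exact absurd rfl hne
    | cons a t ih =>
      have ha : a ∈ Subsemigroup.closure (𝒜 : Set G) :=
        Subsemigroup.subset_closure (by simpa using hmem a (by simp))
      rcases eq_or_ne t [] with rfl | ht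
      · simpa using ha
      · have hmt : ∀ y ∈ t, y ∈ 𝒜 := fun y hy => hmem y (List.mem_cons_of_mem _ hy)
        simpa using mul_mem ha (ih ht hmt)

/-- For a finite nonempty subset `𝒜` of a group `G`, the neutral
element is represented by a full-image word over `𝒜` if and only if the subsemigroup
generated by `𝒜` is a group. -/
theorem identity_repr_by_full_image_word_iff_closure_isSubgroup
    {G : Type*} [Group G] (𝒜 : Finset G) (h𝒜 : 𝒜.Nonempty) :
    (∃ l : List G, IsFullImageWord 𝒜 l ∧ l.prod = 1) ↔
      (Subsemigroup.closure (𝒜 : Set G)).IsSubgroup := by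
  constructor
  · rintro ⟨l, ⟨hne, hmem, hfull⟩, hprod⟩
    have h1 : (1 : G) ∈ Subsemigroup.closure (𝒜 : Set G) :=
      (mem_semigroup_closure_iff 𝒜 1).2 ⟨l, hne, hmem, hprod⟩
    -- each generator has its inverse in the closure
    have hgen : ∀ a ∈ 𝒜, a⁻¹ ∈ Subsemigroup.closure (𝒜 : Set G) := by
      intro a ha
      obtain ⟨u, v, rfl⟩ := List.append_of_mem (hfull a ha)
      refine (mem_semigroup_closure_iff 𝒜 a⁻¹).2 ⟨v ++ (u ++ a :: v) ++ u, by simp, ?_, ?_⟩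
      · intro y hy
        apply hmem
        simp only [List.mem_append, List.mem_cons] at hy ⊢
        tauto
      · have : u.prod * (a * v.prod) = 1 := by simpa using hprod
        simp only [List.prod_append, List.prod_cons]
        have h4 : a * v.prod = u.prod⁻¹ := eq_inv_of_mul_eq_one_right this
        have h3 : a * (v.prod * u.prod) = 1 := by
          rw [← mul_assoc, h4, inv_mul_cancel]
        calc v.prod * (u.prod * (a * v.prod)) * u.prod
            = v.prod * 1 * u.prod := by rw [this]
          _ = v.prod * u.prod := by group
          _ = a⁻¹ := eq_inv_of_mul_eq_one_right h3
    refine ⟨h1, fun x hx => ?_⟩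
    induction hx using Subsemigroup.closure_induction with
    | mem a ha => exact hgen a (by simpa using ha)
    | mul a b _ _ iha ihb => simpa [mul_inv_rev] using mul_mem ihb iha
  · rintro ⟨h1, hinv⟩
    have h : ∀ a ∈ 𝒜, ∃ w : List G, w ≠ [] ∧ (∀ y ∈ w, y ∈ 𝒜) ∧ w.prod = a⁻¹ := by
      intro a ha
      exact (mem_semigroup_closure_iff 𝒜 a⁻¹).1
        (hinv a (Subsemigroup.subset_closure (by simpa using ha)))
    choose! w hwne hwmem hwprod using h
    refine ⟨𝒜.toList.flatMap (fun a => a :: w a), ⟨?_, ?_, ?_⟩, ?_⟩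
    · obtain ⟨a, ha⟩ := h𝒜
      have : a ∈ 𝒜.toList.flatMap (fun a => a :: w a) :=
        List.mem_flatMap.2 ⟨a, by simpa using ha, by simp⟩
      exact List.ne_nil_of_mem this
    · intro x hx
      obtain ⟨a, ha, hx⟩ := List.mem_flatMap.1 hx
      have ha' : a ∈ 𝒜 := by simpa using ha
      rcases List.mem_cons.1 hx with rfl | hx
      · exact ha'
      · exact hwmem a ha' x hx
    · intro a ha
      exact List.mem_flatMap.2 ⟨a, by simpa using ha, by simp⟩
    · have key : ∀ L : List G, (∀ a ∈ L, a ∈ 𝒜) → (L.flatMap (fun a => a :: w a)).prod = 1 := by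
        intro L
        induction L with
        | nil => simp
        | cons a t ih =>
          intro hL
          have ha : a ∈ 𝒜 := hL a (by simp)
          have ht : ∀ b ∈ t, b ∈ 𝒜 := fun b hb => hL b (by simp [hb])
          simp [List.prod_cons, ih ht, ← mul_assoc, hwprod a ha]
      exact key _ (by simp)
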